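/- Let n, m be natural numbers. The partition [2m, 2m−2] of 4m−2 satisfies the symplectic condition (every odd part appears with even multiplicity), and so does [2m−1, 2m−1]. Moreover [2m, 2m−2] strictly dominates [2m−1, 2m−1] in the dominance order, and the two partitions are adjacent: there is no symplectic partition strictly between them. -/

import Mathlib

/-- A (decreasingly sorted) list of positive naturals summing to N. -/
def IsPartitionOf (N : ℕ) (p : List ℕ) : Prop :=
  p.Pairwise (· ≥ ·) ∧ (∀ x ∈ p, 0 < x) ∧ p.sum = N

/-- Symplectic condition: every odd part appears with even multiplicity. -/
def SympPart (p : List ℕ) : Prop := ∀ a ∈ p, Odd a → Even (p.count a)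

/-- Dominance order on partitions (written as lists, compared via partial sums of
initial segments; trailing parts padded by zeros implicitly). -/
def Dominates (p q : List ℕ) : Prop := ∀ j : ℕ, (q.take j).sum ≤ (p.take j).sum

/-- [2m, 2m−2] and [2m−1, 2m−1] are symplectic partitions of 4m−2, the first strictly
dominates the second, and they are adjacent: no symplectic partition lies strictly
between them in the dominance order. -/
theorem stmt17 (m : ℕ) (hm : 2 ≤ m) :
    IsPartitionOf (4 * m - 2) [2 * m, 2 * m - 2] ∧ SympPart [2 * m, 2 * m - 2] ∧
    IsPartitionOf (4 * m - 2) [2 * m - 1, 2 * m - 1] ∧ SympPart [2 * m - 1, 2 * m - 1] ∧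
    Dominates [2 * m, 2 * m - 2] [2 * m - 1, 2 * m - 1] ∧
    ([2 * m, 2 * m - 2] ≠ [2 * m - 1, 2 * m - 1]) ∧
    ¬ ∃ q : List ℕ, IsPartitionOf (4 * m - 2) q ∧ SympPart q ∧
        Dominates [2 * m, 2 * m - 2] q ∧ Dominates q [2 * m - 1, 2 * m - 1] ∧
        q ≠ [2 * m, 2 * m - 2] ∧ q ≠ [2 * m - 1, 2 * m - 1] := by
  refine ⟨⟨?_, ?_, ?_⟩, ?_, ⟨?_, ?_, ?_⟩, ?_, ?_, ?_, ?_⟩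
  · simp
  · intro x hx; simp at hx; omega
  · simp; omega
  · intro a ha hodd
    simp at ha
    obtain ⟨k, hk⟩ := hodd
    omega
  · simp
  · intro x hx; simp at hx; omega
  · simp; omega
  · intro a ha hodd
    simp at ha
    subst ha
    simp [List.count_cons]
  · intro j
    match j with
    | 0 => simp
    | 1 => simp
    | (n+2) =>
      rw [List.take_of_length_le (by simp), List.take_of_length_le (by simp)]
      simp
      omega
  · simp; omega
  · rintro ⟨q, ⟨hs, hpos, hsum⟩, _, hd1, hd2, hne1, hne2⟩
    match q with
    | [] => simp at hsum; omega
    | [a] =>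
      simp at hsum
      have h1 := hd1 1
      simp at h1
      omega
    | [a, b] =>
      simp at hsum
      have h1 := hd1 1
      have h2 := hd2 1
      simp at h1 h2
      have : a = 2 * m - 1 ∨ a = 2 * m := by omega
      rcases this with h | h
      · have hb : b = 2 * m - 1 := by omega
        exact hne2 (by rw [h, hb])
      · have hb : b = 2 * m - 2 := by omega
        exact hne1 (by rw [h, hb])
    | a :: b :: c :: rest =>
      simp at hsum
      have h2 := hd2 2
      simp at h2
      have hc : 0 < c := hpos c (by simp)
      omega
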